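/- Every priority-downward-closed set of words over a finite priority alphabet is a regular language. -/

import Mathlib

/-- The priority embedding underlying the priority order: `u = u₁…u_k`,
`v = v₁u₁v₂u₂…v_ku_k` where each `vᵢ` consists of letters of priority at most
that of `uᵢ`. -/
inductive PrioEmb {α : Type*} (prio : α → ℕ) : List α → List α → Prop
  | nil : PrioEmb prio [] []
  | cons (a : α) {u v : List α} (w : List α) (hw : ∀ b ∈ w, prio b ≤ prio a)
      (h : PrioEmb prio u v) : PrioEmb prio (a :: u) (w ++ a :: v)

/-- The priority order: `u ⊑ v` iff `u = ε`, or `u = u₁…u_k` and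
`v = v₁u₁…v_ku_k` with each `vᵢ` over letters of priority at most that of `uᵢ`. -/
def PrioLE {α : Type*} (prio : α → ℕ) (u v : List α) : Prop :=
  u = [] ∨ PrioEmb prio u v


namespace PrioAux

variable {α : Type*} {prio : α → ℕ}

lemma emb_nil_left {v : List α} (h : PrioEmb prio [] v) : v = [] := by
  cases h; rfl

lemma emb_cons_of_eq {a : α} {u v v' w : List α} (hw : ∀ b ∈ w, prio b ≤ prio a)
    (h : PrioEmb prio u v) (he : v' = w ++ a :: v) : PrioEmb prio (a :: u) v' := by
  subst he; exact PrioEmb.cons a w hw h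

lemma emb_refl (u : List α) : PrioEmb prio u u := by
  induction u with
  | nil => exact PrioEmb.nil
  | cons a u ih => exact emb_cons_of_eq (w := []) (by simp) ih (by simp)

lemma emb_append {u v u' v' : List α} (h : PrioEmb prio u v) (h' : PrioEmb prio u' v') :
    PrioEmb prio (u ++ u') (v ++ v') := by
  induction h with
  | nil => simpa using h'
  | cons a w hw h ih => exact emb_cons_of_eq hw ih (by simp)

lemma emb_cons_inv {a : α} {u v : List α} (h : PrioEmb prio (a :: u) v) :
    ∃ w v', v = w ++ a :: v' ∧ (∀ b ∈ w, prio b ≤ prio a) ∧ PrioEmb prio u v' := by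
  cases h with
  | cons _ w hw h => exact ⟨w, _, rfl, hw, h⟩

lemma emb_split {u₁ u₂ v : List α} (h : PrioEmb prio (u₁ ++ u₂) v) :
    ∃ v₁ v₂, v = v₁ ++ v₂ ∧ PrioEmb prio u₁ v₁ ∧ PrioEmb prio u₂ v₂ := by
  induction u₁ generalizing v with
  | nil => exact ⟨[], v, rfl, PrioEmb.nil, by simpa using h⟩
  | cons a u₁ ih =>
    obtain ⟨w, v', rfl, hw, h'⟩ := emb_cons_inv h
    obtain ⟨v₁, v₂, rfl, h₁, h₂⟩ := ih h'
    exact ⟨w ++ a :: v₁, v₂, by simp, emb_cons_of_eq hw h₁ rfl, h₂⟩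

lemma emb_prio_bound {u v : List α} {P : ℕ} (h : PrioEmb prio u v)
    (hu : ∀ c ∈ u, prio c ≤ P) : ∀ c ∈ v, prio c ≤ P := by
  induction h with
  | nil => simp
  | cons a w hw h ih =>
    intro c hc
    have ha : prio a ≤ P := hu a (by simp)
    rcases List.mem_append.1 hc with hc | hc
    · exact le_trans (hw c hc) ha
    · rcases List.mem_cons.1 hc with rfl | hc
      · exact ha
      · exact ih (fun c hc => hu c (by simp [hc])) c hc

lemma emb_trans {u v w : List α} (h₁ : PrioEmb prio u v) (h₂ : PrioEmb prio v w) :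
    PrioEmb prio u w := by
  induction h₁ generalizing w with
  | nil => rw [emb_nil_left h₂]; exact PrioEmb.nil
  | cons a junk hjunk h ih =>
    obtain ⟨w₁, w₂, rfl, hj, hrest⟩ := emb_split h₂
    obtain ⟨j₂, w₃, rfl, hj₂, h₃⟩ := emb_cons_inv hrest
    refine emb_cons_of_eq (w := w₁ ++ j₂) ?_ (ih h₃) (by simp)
    intro b hb
    rcases List.mem_append.1 hb with hb | hb
    · exact emb_prio_bound hj hjunk b hb
    · exact hj₂ b hb

lemma emb_snoc_inv {a : α} {u v : List α} (h : PrioEmb prio (u ++ [a]) v) :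
    ∃ v₁ w, v = v₁ ++ w ++ [a] ∧ PrioEmb prio u v₁ ∧ ∀ c ∈ w, prio c ≤ prio a := by
  obtain ⟨v₁, v₂, rfl, h₁, h₂⟩ := emb_split h
  obtain ⟨w, v₃, rfl, hw, h₃⟩ := emb_cons_inv h₂
  rw [emb_nil_left h₃]
  exact ⟨v₁, w, by simp, h₁, hw⟩

lemma emb_length {u v : List α} (h : PrioEmb prio u v) : u.length ≤ v.length := by
  induction h with
  | nil => simp
  | cons a w hw h ih => simp; omega

lemma emb_eq_of_length {u v : List α} (h : PrioEmb prio u v) (hl : v.length ≤ u.length) :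
    u = v := by
  induction h with
  | nil => rfl
  | cons a w hw h ih =>
    have := emb_length h
    simp at hl
    have hw0 : w = [] := by
      have : w.length = 0 := by omega
      simpa using this
    subst hw0
    simp [ih (by omega)]

/-- embedding into a prefix -/
def PrefEmb (prio : α → ℕ) (u v : List α) : Prop :=
  ∃ v₁ v₂ : List α, v = v₁ ++ v₂ ∧ PrioEmb prio u v₁

lemma prefEmb_of_emb {u v : List α} (h : PrioEmb prio u v) : PrefEmb prio u v :=
  ⟨v, [], by simp, h⟩

lemma prefEmb_refl (u : List α) : PrefEmb prio u u := prefEmb_of_emb (emb_refl u)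

lemma prefEmb_trans {u v w : List α} (h₁ : PrefEmb prio u v) (h₂ : PrefEmb prio v w) :
    PrefEmb prio u w := by
  obtain ⟨v₁, v₂, rfl, h₁⟩ := h₁
  obtain ⟨w₁, w₂, rfl, h₂⟩ := h₂
  obtain ⟨x₁, x₂, rfl, hx₁, hx₂⟩ := emb_split h₂
  exact ⟨x₁, x₂ ++ w₂, by simp, emb_trans h₁ hx₁⟩

end PrioAux

namespace PrioAux

variable {α : Type*} {prio : α → ℕ}

/-- flatten of pair blocks -/
def J : List (α × List α) → List α := fun l => (l.map fun q => q.1 :: q.2).flatten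

@[simp] lemma J_nil : J ([] : List (α × List α)) = [] := rfl

@[simp] lemma J_cons (q : α × List α) (l : List (α × List α)) :
    J (q :: l) = q.1 :: (q.2 ++ J l) := by simp [J]

@[simp] lemma J_append (l l' : List (α × List α)) : J (l ++ l') = J l ++ J l' := by
  simp [J]

lemma mem_J {x : α} {l : List (α × List α)} (hx : x ∈ J l) :
    ∃ q ∈ l, x = q.1 ∨ x ∈ q.2 := by
  induction l with
  | nil => simp [J] at hx
  | cons q l ih =>
    rw [J_cons] at hx
    rcases List.mem_cons.1 hx with rfl | hx
    · exact ⟨q, by simp⟩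
    · rcases List.mem_append.1 hx with hx | hx
      · exact ⟨q, by simp [hx]⟩
      · obtain ⟨q', hq', h⟩ := ih hx
        exact ⟨q', by simp [hq'], h⟩

/-- split a word at its letters of priority exactly `p` -/
def decompose (prio : α → ℕ) (p : ℕ) : List α → List α × List (α × List α)
  | [] => ([], [])
  | c :: v =>
    let d := decompose prio p v
    if prio c = p then ([], (c, d.1) :: d.2) else (c :: d.1, d.2)

lemma decompose_spec (p : ℕ) (v : List α) :
    v = (decompose prio p v).1 ++ J (decompose prio p v).2 := by
  induction v with
  | nil => rfl
  | cons c v ih =>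
    by_cases h : prio c = p <;> simp [decompose, h] <;> exact ih

lemma mem_decompose_fst {p : ℕ} {v : List α} {x : α} (hx : x ∈ (decompose prio p v).1) :
    prio x ≠ p ∧ x ∈ v := by
  induction v with
  | nil => simp [decompose] at hx
  | cons c v ih =>
    by_cases h : prio c = p
    · simp [decompose, h] at hx
    · simp [decompose, h] at hx
      rcases hx with rfl | hx
      · exact ⟨h, by simp⟩
      · exact ⟨(ih hx).1, by simp [(ih hx).2]⟩

lemma mem_decompose_snd {p : ℕ} {v : List α} {q : α × List α}
    (hq : q ∈ (decompose prio p v).2) :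
    prio q.1 = p ∧ q.1 ∈ v ∧ ∀ x ∈ q.2, prio x ≠ p ∧ x ∈ v := by
  induction v with
  | nil => simp [decompose] at hq
  | cons c v ih =>
    by_cases h : prio c = p
    · simp [decompose, h] at hq
      rcases hq with rfl | hq
      · refine ⟨h, by simp, ?_⟩
        intro x hx
        have := mem_decompose_fst (p := p) hx
        exact ⟨this.1, by simp [this.2]⟩
      · obtain ⟨h1, h2, h3⟩ := ih hq
        exact ⟨h1, by simp [h2], fun x hx => ⟨(h3 x hx).1, by simp [(h3 x hx).2]⟩⟩
    · simp [decompose, h] at hq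
      obtain ⟨h1, h2, h3⟩ := ih hq
      exact ⟨h1, by simp [h2], fun x hx => ⟨(h3 x hx).1, by simp [(h3 x hx).2]⟩⟩

/-- pair relation used for Higman's lemma (inner blocks) -/
def Q (prio : α → ℕ) (q q' : α × List α) : Prop :=
  q.1 = q'.1 ∧ PrefEmb prio q.2 q'.2

/-- pair relation for the last block (rigid end) -/
def Q' (prio : α → ℕ) (q q' : α × List α) : Prop :=
  q.1 = q'.1 ∧ PrioEmb prio q.2 q'.2

lemma Q_refl (q : α × List α) : Q prio q q := ⟨rfl, prefEmb_refl _⟩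

lemma Q_trans {q q' q'' : α × List α} (h : Q prio q q') (h' : Q prio q' q'') :
    Q prio q q'' := ⟨h.1.trans h'.1, prefEmb_trans h.2 h'.2⟩

/-- The key construction lemma: sufficiency of the encoding order. -/
lemma build {p : ℕ} {a : α} {y y' : List α} {m m' : List (α × List α)} (junk : List α)
    (hsl : List.SublistForall₂ (Q prio) m m')
    (hm : ∀ q ∈ m, prio q.1 = p)
    (hj : ∀ c ∈ junk, prio c ≤ p)
    (hm' : ∀ c ∈ J m', prio c ≤ p)
    (hy : PrioEmb prio y y') (ha : prio a = p) :
    PrioEmb prio (J (m ++ [(a, y)])) (junk ++ J (m' ++ [(a, y')])) := by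
  induction hsl generalizing junk with
  | nil =>
    rename_i l
    simp only [List.nil_append, J_append, J_cons, J_nil]
    refine emb_cons_of_eq (w := junk ++ J l) ?_ (by simpa using hy) (by simp)
    intro b hb
    rcases List.mem_append.1 hb with hb | hb
    · simpa [ha] using hj b hb
    · simpa [ha] using hm' b hb
  | cons hq hrest ih =>
    rename_i q q' l l'
    obtain ⟨b, z⟩ := q
    obtain ⟨b', z'⟩ := q'
    obtain ⟨hbb, hpe⟩ := hq
    dsimp at hbb hpe
    subst hbb
    have hq1 : prio b = p := hm (b, z) (by simp)
    obtain ⟨w₁, w₂, hw, hemb⟩ := hpe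
    have hsub : ∀ c ∈ J l', prio c ≤ p := fun c hc => hm' c (by simp [hc])
    have hq'2 : ∀ c ∈ z', prio c ≤ p := fun c hc => hm' c (by simp [hc])
    have hw2 : ∀ c ∈ w₂, prio c ≤ p := fun c hc => hq'2 c (by rw [hw]; simp [hc])
    have inner : PrioEmb prio (z ++ J (l ++ [(a, y)])) (z' ++ J (l' ++ [(a, y')])) := by
      rw [hw, List.append_assoc]
      exact emb_append hemb (ih w₂ (fun q hq => hm q (by simp [hq])) hw2 hsub)
    simp only [List.cons_append, J_cons]
    exact emb_cons_of_eq (w := junk)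
      (fun c hc => by simpa [hq1] using hj c hc) inner (by simp)
  | cons_right hrest ih =>
    rename_i q' l l'
    have : PrioEmb prio (J (l ++ [(a, y)]))
        ((junk ++ (q'.1 :: q'.2)) ++ J (l' ++ [(a, y')])) := by
      refine ih (junk ++ (q'.1 :: q'.2)) hm ?_ (fun c hc => hm' c (by simp [hc]))
      intro c hc
      rcases List.mem_append.1 hc with hc | hc
      · exact hj c hc
      · exact hm' c (by rcases List.mem_cons.1 hc with rfl | hc <;> simp [hc])
    simpa using this

end PrioAux

namespace PrioAux

variable {α : Type*} {prio : α → ℕ}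

lemma pwo_mono_rel {β : Type*} {s : Set β} {r r' : β → β → Prop}
    (h : s.PartiallyWellOrderedOn r) (hrr : ∀ x y, r x y → r' x y) :
    s.PartiallyWellOrderedOn r' := by
  intro f
  obtain ⟨m, n, hmn, hr⟩ := h f
  exact ⟨m, n, hmn, hrr _ _ hr⟩

lemma pwo_pullback {β γ : Type*} {r : β → β → Prop} {r' : γ → γ → Prop}
    {s : Set β} {t : Set γ} (g : β → γ)
    (ht : t.PartiallyWellOrderedOn r') (hg : ∀ x ∈ s, g x ∈ t)
    (hsound : ∀ x ∈ s, ∀ y ∈ s, r' (g x) (g y) → r x y) :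
    s.PartiallyWellOrderedOn r := by
  intro f
  obtain ⟨m, n, hmn, hr⟩ := ht (fun n => ⟨g (f n), hg _ (f n).2⟩)
  exact ⟨m, n, hmn, hsound _ (f m).2 _ (f n).2 hr⟩

/-- words using only priorities `< p` -/
def Low (prio : α → ℕ) (p : ℕ) : Set (List α) := {v | ∀ c ∈ v, prio c < p}

/-- the encoding relation on the codomain of the encoding -/
def EncRel (prio : α → ℕ) :
    List α ⊕ (List α × List (α × List α) × (α × List α)) →
    List α ⊕ (List α × List (α × List α) × (α × List α)) → Prop
  | Sum.inl z, Sum.inl z' => PrioEmb prio z z'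
  | Sum.inr x, Sum.inr y =>
      PrefEmb prio x.1 y.1 ∧ (List.SublistForall₂ (Q prio) x.2.1 y.2.1 ∧ Q' prio x.2.2 y.2.2)
  | _, _ => False

open Classical in
/-- the encoding of a word, splitting at letters of priority `p` -/
noncomputable def E (prio : α → ℕ) (p : ℕ) (v : List α) :
    List α ⊕ (List α × List (α × List α) × (α × List α)) :=
  if h : (decompose prio p v).2 = [] then Sum.inl v
  else Sum.inr ((decompose prio p v).1, (decompose prio p v).2.dropLast,
    (decompose prio p v).2.getLast h)

theorem low_pwo [Fintype α] (prio : α → ℕ) :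
    ∀ p : ℕ, (Low prio p).PartiallyWellOrderedOn (PrioEmb prio)
  | 0 => by
    haveI : IsRefl (List α) (PrioEmb prio) := ⟨emb_refl⟩
    apply Set.Subsingleton.partiallyWellOrderedOn
    intro x hx y hy
    have hx' : x = [] := List.eq_nil_iff_forall_not_mem.2 (fun c hc => by simpa using hx c hc)
    have hy' : y = [] := List.eq_nil_iff_forall_not_mem.2 (fun c hc => by simpa using hy c hc)
    rw [hx', hy']
  | (p + 1) => by
    have IH : (Low prio p).PartiallyWellOrderedOn (PrioEmb prio) := low_pwo prio p
    -- instances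
    haveI : IsRefl (List α) (PrioEmb prio) := ⟨emb_refl⟩
    haveI : IsTrans (List α) (PrioEmb prio) := ⟨fun _ _ _ => emb_trans⟩
    haveI : IsRefl (List α) (PrefEmb prio) := ⟨prefEmb_refl⟩
    haveI : IsTrans (List α) (PrefEmb prio) := ⟨fun _ _ _ => prefEmb_trans⟩
    haveI : IsRefl (α × List α) (Q prio) := ⟨Q_refl⟩
    haveI : IsTrans (α × List α) (Q prio) := ⟨fun _ _ _ => Q_trans⟩
    haveI : IsPreorder (List α) (PrioEmb prio) := {}
    haveI : IsPreorder (List α) (PrefEmb prio) := {}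
    haveI : IsPreorder (α × List α) (Q prio) := {}
    haveI : IsPreorder (List (α × List α)) (List.SublistForall₂ (Q prio)) := {}
    -- component pwo's
    have hPref : (Low prio p).PartiallyWellOrderedOn (PrefEmb prio) :=
      pwo_mono_rel IH (fun _ _ => prefEmb_of_emb)
    have hLet : ({a : α | prio a = p} : Set α).PartiallyWellOrderedOn (· = ·) :=
      (Set.toFinite _).partiallyWellOrderedOn
    set Pairs : Set (α × List α) := {a | prio a = p} ×ˢ Low prio p with hPairs
    have hQ : Pairs.PartiallyWellOrderedOn (Q prio) := by
      have := hLet.prod hPref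
      exact pwo_mono_rel this (fun x y hxy => ⟨hxy.1, hxy.2⟩)
    have hQ' : Pairs.PartiallyWellOrderedOn (Q' prio) := by
      have := hLet.prod IH
      exact pwo_mono_rel this (fun x y hxy => ⟨hxy.1, hxy.2⟩)
    have hHig : ({l : List (α × List α) | ∀ x, x ∈ l → x ∈ Pairs}).PartiallyWellOrderedOn
        (List.SublistForall₂ (Q prio)) :=
      Set.PartiallyWellOrderedOn.partiallyWellOrderedOn_sublistForall₂ (Q prio) hQ
    have hProd := hPref.prod (hHig.prod hQ')
    -- target set
    set T : Set (List α ⊕ (List α × List (α × List α) × (α × List α))) :=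
      (Sum.inl '' Low prio p) ∪
      (Sum.inr '' ((Low prio p) ×ˢ
        (({l : List (α × List α) | ∀ x, x ∈ l → x ∈ Pairs}) ×ˢ Pairs))) with hT
    have hTpwo : T.PartiallyWellOrderedOn (EncRel prio) := by
      apply Set.PartiallyWellOrderedOn.union
      · exact IH.image_of_monotone_on (fun a _ b _ h => h)
      · exact hProd.image_of_monotone_on (fun a _ b _ h => h)
    -- pull back along the encoding
    apply pwo_pullback (E prio p) hTpwo
    · -- encoding lands in T
      intro v hv
      have hspec := decompose_spec (prio := prio) p v
      by_cases h : (decompose prio p v).2 = []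
      · rw [E]; rw [dif_pos h]
        refine Or.inl ⟨v, ?_, rfl⟩
        intro c hc
        have hne : prio c ≠ p := by
          have : c ∈ (decompose prio p v).1 := by
            rw [hspec] at hc
            rcases List.mem_append.1 hc with hc | hc
            · exact hc
            · rw [h] at hc; simp at hc
          exact (mem_decompose_fst this).1
        have := hv c hc
        omega
      · rw [E]; rw [dif_neg h]
        refine Or.inr ⟨_, ⟨?_, ?_, ?_⟩, rfl⟩
        · intro c hc
          have h2 := mem_decompose_fst hc
          have := hv c h2.2
          omega
        · intro q hq
          have hq2 : q ∈ (decompose prio p v).2 := List.dropLast_subset _ hq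
          obtain ⟨h1, h2, h3⟩ := mem_decompose_snd hq2
          exact ⟨h1, fun x hx => by have := (h3 x hx); have := hv x this.2; omega⟩
        · obtain ⟨h1, h2, h3⟩ := mem_decompose_snd (List.getLast_mem h)
          exact ⟨h1, fun x hx => by have := (h3 x hx); have := hv x this.2; omega⟩
    · -- soundness
      intro x hx y hy hr
      have hxspec := decompose_spec (prio := prio) p x
      have hyspec := decompose_spec (prio := prio) p y
      by_cases h1 : (decompose prio p x).2 = [] <;>
        by_cases h2 : (decompose prio p y).2 = []
      · rw [E, dif_pos h1, E, dif_pos h2] at hr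
        exact hr
      · rw [E, dif_pos h1, E, dif_neg h2] at hr
        exact absurd hr (by simp [EncRel])
      · rw [E, dif_neg h1, E, dif_pos h2] at hr
        exact absurd hr (by simp [EncRel])
      · rw [E, dif_neg h1, E, dif_neg h2] at hr
        obtain ⟨hpe, hsl, hqq⟩ := hr
        dsimp at hpe hsl hqq
        obtain ⟨w₁, w₂, hw, hembz⟩ := hpe
        have hq1 : prio ((decompose prio p x).2.getLast h1).1 = p :=
          (mem_decompose_snd (List.getLast_mem h1)).1
        have hm : ∀ r ∈ (decompose prio p x).2.dropLast, prio r.1 = p :=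
          fun r hr => (mem_decompose_snd (List.dropLast_subset _ hr)).1
        have hj : ∀ c ∈ w₂, prio c ≤ p := by
          intro c hc
          have : c ∈ (decompose prio p y).1 := by rw [hw]; simp [hc]
          have := hy c (mem_decompose_fst this).2
          omega
        have hm' : ∀ c ∈ J (decompose prio p y).2.dropLast, prio c ≤ p := by
          intro c hc
          obtain ⟨r, hrmem, hcr⟩ := mem_J hc
          obtain ⟨e1, _, e3⟩ := mem_decompose_snd (List.dropLast_subset _ hrmem)
          rcases hcr with rfl | hcr
          · omega
          · have := hy c (e3 c hcr).2
            omega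
        have key := build (prio := prio) (a := ((decompose prio p x).2.getLast h1).1)
          (y := ((decompose prio p x).2.getLast h1).2)
          (y' := ((decompose prio p y).2.getLast h2).2)
          w₂ hsl hm hj hm' hqq.2 hq1
        have hxd : x = (decompose prio p x).1 ++
            J ((decompose prio p x).2.dropLast ++ [(decompose prio p x).2.getLast h1]) := by
          conv_lhs => rw [decompose_spec (prio := prio) p x]
          rw [List.dropLast_append_getLast h1]
        have hyd : y = (w₁ ++ w₂) ++
            J ((decompose prio p y).2.dropLast ++ [(decompose prio p y).2.getLast h2]) := by
          conv_lhs => rw [decompose_spec (prio := prio) p y]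
          rw [List.dropLast_append_getLast h2, hw]
        rw [hxd, hyd, List.append_assoc]
        refine emb_append hembz ?_
        have he1 : ((((decompose prio p x).2.getLast h1).1,
            ((decompose prio p x).2.getLast h1).2)) = (decompose prio p x).2.getLast h1 := rfl
        have he2 : ((((decompose prio p x).2.getLast h1).1,
            ((decompose prio p y).2.getLast h2).2)) = (decompose prio p y).2.getLast h2 := by
          rw [hqq.1]
        rw [he1, he2] at key
        exact key
  termination_by p => p

end PrioAux

namespace PrioAux

variable {α : Type*} {prio : α → ℕ}

theorem univ_pwo [Fintype α] (prio : α → ℕ) :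
    (Set.univ : Set (List α)).PartiallyWellOrderedOn (PrioEmb prio) := by
  refine (low_pwo prio ((Finset.univ.sup prio) + 1)).mono ?_
  intro v _
  intro c _
  have : prio c ≤ Finset.univ.sup prio := Finset.le_sup (Finset.mem_univ c)
  omega

lemma prioLE_refl (u : List α) : PrioLE prio u u := Or.inr (emb_refl u)

lemma prioLE_trans {u v w : List α} (h₁ : PrioLE prio u v) (h₂ : PrioLE prio v w) :
    PrioLE prio u w := by
  rcases h₁ with rfl | h₁
  · exact Or.inl rfl
  · rcases h₂ with rfl | h₂
    · have := emb_length h₁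
      exact Or.inl (by cases u <;> simp_all)
    · exact Or.inr (emb_trans h₁ h₂)

lemma prioLE_length {u v : List α} (h : PrioLE prio u v) (hne : u ≠ v) :
    u.length < v.length := by
  rcases h with rfl | h
  · cases v with
    | nil => exact absurd rfl hne
    | cons a v => simp
  · have h1 := emb_length h
    rcases lt_or_eq_of_le h1 with h2 | h2
    · exact h2
    · exact absurd (emb_eq_of_length h (le_of_eq h2.symm)) hne

/-- finite basis for an upward closed set -/
theorem finite_basis [Fintype α] (prio : α → ℕ) (M : Set (List α))
    (hM : ∀ u v, PrioLE prio u v → u ∈ M → v ∈ M) :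
    ∃ B : Set (List α), B.Finite ∧ ∀ v, v ∈ M ↔ ∃ u ∈ B, PrioLE prio u v := by
  classical
  set Min : Set (List α) := {u | u ∈ M ∧ ∀ w ∈ M, PrioLE prio w u → w = u} with hMin
  have hex : ∀ n (v : List α), v.length ≤ n → v ∈ M → ∃ u ∈ Min, PrioLE prio u v := by
    intro n
    induction n with
    | zero =>
      intro v hv hvM
      have hv0 : v = [] := by
        cases v with
        | nil => rfl
        | cons a v => simp at hv
      subst hv0
      refine ⟨[], ⟨hvM, ?_⟩, prioLE_refl _⟩
      intro w _ hw
      rcases hw with rfl | hw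
      · rfl
      · exact emb_eq_of_length hw (by simp)
    | succ n ih =>
      intro v hv hvM
      by_cases hmin : ∀ w ∈ M, PrioLE prio w v → w = v
      · exact ⟨v, ⟨hvM, hmin⟩, prioLE_refl _⟩
      · push_neg at hmin
        obtain ⟨w, hwM, hwv, hne⟩ := hmin
        have := prioLE_length hwv hne
        obtain ⟨u, hu, huw⟩ := ih w (by omega) hwM
        exact ⟨u, hu, prioLE_trans huw hwv⟩
  have hanti : IsAntichain (PrioLE prio) Min := by
    intro u hu v hv hne hle
    exact hne (hv.2 u hu.1 hle)
  have hfin : Min.Finite := by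
    refine hanti.finite_of_partiallyWellOrderedOn ?_
    refine pwo_mono_rel ((univ_pwo prio).mono (Set.subset_univ _)) ?_
    exact fun x y h => Or.inr h
  refine ⟨Min, hfin, fun v => ⟨fun hv => hex v.length v le_rfl hv, ?_⟩⟩
  rintro ⟨u, hu, huv⟩
  exact hM u v huv hu.1

end PrioAux

namespace PrioAux

variable {α : Type*} (prio : α → ℕ)

/-- state space of the union automaton -/
def St (S : Finset (List α)) : Type _ := (u : {u : List α // u ∈ S}) × Fin (u.1.length + 1)

/-- the union NFA recognizing the upward closure of `S` -/
def autN (S : Finset (List α)) : NFA α (St S) where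
  step s b := {t | t.1 = s.1 ∧ ∃ h : (s.2 : ℕ) < s.1.1.length,
    (((t.2 : ℕ) = (s.2 : ℕ) + 1 ∧ b = s.1.1[(s.2 : ℕ)]'h) ∨
     ((t.2 : ℕ) = (s.2 : ℕ) ∧ prio b ≤ prio (s.1.1[(s.2 : ℕ)]'h)))}
  start := {s | (s.2 : ℕ) = 0}
  accept := {s | (s.2 : ℕ) = s.1.1.length}

/-- run invariant -/
def Inv (u : List α) (i : ℕ) (x : List α) : Prop :=
  (i = u.length ∧ PrioEmb prio u x) ∨
  (∃ h : i < u.length, ∃ y w, x = y ++ w ∧ PrioEmb prio (u.take i) y ∧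
    ∀ b ∈ w, prio b ≤ prio (u[i]'h))

lemma mem_eval {S : Finset (List α)} (hS : ∀ u ∈ S, u ≠ []) (x : List α) :
    ∀ (u : {u : List α // u ∈ S}) (i : Fin (u.1.length + 1)),
      ((⟨u, i⟩ : St S) ∈ (autN prio S).evalFrom (autN prio S).start x ↔
        Inv prio u.1 (i : ℕ) x) := by
  induction x using List.reverseRecOn with
  | nil =>
    intro u i
    rw [NFA.evalFrom_nil]
    have hulen : 0 < u.1.length := by
      cases hu : u.1 with
      | nil => exact absurd hu (hS u.1 u.2)
      | cons a l => simp [hu]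
    constructor
    · intro h
      have h0 : (i : ℕ) = 0 := h
      refine Or.inr ⟨by omega, [], [], rfl, ?_, by simp⟩
      simp [h0]
      exact PrioEmb.nil
    · rintro (⟨hlen, hemb⟩ | ⟨h, y, w, hyw, hemb, hw⟩)
      · have h2 := emb_length hemb
        simp only [List.length_nil, Nat.le_zero] at h2
        show (i : ℕ) = 0
        omega
      · have hy : y = [] := by
          cases List.append_eq_nil_iff.1 hyw.symm; assumption
        subst hy
        have h2 := emb_length hemb
        rw [List.length_take] at h2
        simp only [List.length_nil, Nat.le_zero] at h2
        show (i : ℕ) = 0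
        omega
  | append_singleton x b ih =>
    intro u i
    rw [NFA.evalFrom_append, NFA.evalFrom_singleton]
    refine NFA.mem_stepSet.trans ?_
    constructor
    · rintro ⟨⟨u2, j⟩, hs, ht1, hlt, hcase⟩
      obtain rfl : (u : {u : List α // u ∈ S}) = u2 := ht1
      dsimp only at hlt hcase
      show Inv prio u.1 (i : ℕ) (x ++ [b])
      have hj := (ih u j).1 hs
      -- the left branch of Inv for j is impossible since j < len
      have hjinv : ∃ h : (j : ℕ) < u.1.length, ∃ y w, x = y ++ w ∧
          PrioEmb prio (u.1.take (j : ℕ)) y ∧ ∀ c ∈ w, prio c ≤ prio (u.1[(j : ℕ)]'h) := by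
        rcases hj with ⟨hlen, _⟩ | h
        · omega
        · exact h
      obtain ⟨hlt', y, w, rfl, hemb, hw⟩ := hjinv
      rcases hcase with ⟨hi, rfl⟩ | ⟨hi, hb⟩
      · -- advance
        have hemb' : PrioEmb prio (u.1.take ((j : ℕ) + 1)) ((y ++ w) ++ [u.1[(j : ℕ)]'hlt]) := by
          rw [← List.take_concat_get' _ _ hlt, List.append_assoc]
          refine emb_append hemb ?_
          have := PrioEmb.cons (prio := prio) (u.1[(j : ℕ)]'hlt) w hw PrioEmb.nil
          simpa using this
        by_cases hend : (i : ℕ) = u.1.length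
        · refine Or.inl ⟨hend, ?_⟩
          have : u.1.take ((j : ℕ) + 1) = u.1 := by
            rw [← hi, hend]; exact List.take_length
          rwa [this] at hemb'
        · have hilt : (i : ℕ) < u.1.length := by omega
          refine Or.inr ⟨hilt, (y ++ w) ++ [u.1[(j : ℕ)]'hlt], [], by simp, ?_, by simp⟩
          rwa [hi]
      · -- stay
        refine Or.inr ⟨by omega, y, w ++ [b], by simp, ?_, ?_⟩
        · rw [hi]; exact hemb
        · intro c hc
          rcases List.mem_append.1 hc with hc | hc
          · have := hw c hc
            simp_rw [hi]
            exact this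
          · simp at hc; subst hc
            simp_rw [hi]
            exact hb
    · intro hinv
      -- split on whether the final letter was consumed by a stay-step or a match-step
      have hcore : ∀ (k : ℕ) (hk : k ≤ u.1.length), PrioEmb prio (u.1.take k) (x ++ [b]) →
          0 < k → ∃ (j : Fin (u.1.length + 1)),
            (⟨u, j⟩ : St S) ∈ (autN prio S).evalFrom (autN prio S).start x ∧
            ∃ h : (j : ℕ) < u.1.length,
              k = (j : ℕ) + 1 ∧ b = u.1[(j : ℕ)]'h := by
        intro k hk hemb hkpos
        obtain ⟨k', rfl⟩ : ∃ k', k = k' + 1 := ⟨k - 1, by omega⟩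
        have hk'lt : k' < u.1.length := by omega
        rw [← List.take_concat_get' _ _ hk'lt] at hemb
        obtain ⟨v₁, ww, heq, hembv, hww⟩ := emb_snoc_inv hemb
        obtain ⟨hx, hbb⟩ := List.append_inj' heq rfl
        have hbb' : b = u.1[k']'hk'lt := by simpa using hbb
        refine ⟨⟨k', by omega⟩, ?_, hk'lt, rfl, hbb'⟩
        rw [ih u ⟨k', by omega⟩]
        exact Or.inr ⟨hk'lt, v₁, ww, hx, hembv, hww⟩
      rcases hinv with ⟨hlen, hemb⟩ | ⟨hlt, y, w, hyw, hemb, hw⟩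
      · have hupos : 0 < u.1.length := by
          cases hu : u.1 with
          | nil => exact absurd hu (hS u.1 u.2)
          | cons a l => simp [hu]
        have hemb' : PrioEmb prio (u.1.take u.1.length) (x ++ [b]) := by
          rwa [List.take_length]
        obtain ⟨j, hj, hjlt, hk, hb⟩ := hcore u.1.length le_rfl hemb' hupos
        exact ⟨⟨u, j⟩, hj, rfl, hjlt, Or.inl ⟨by show (i : ℕ) = (j : ℕ) + 1; omega, hb⟩⟩
      · rcases List.eq_nil_or_concat w with rfl | ⟨w', c, rfl⟩
        · -- w = [], the last letter was matched
          rw [List.append_nil] at hyw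
          subst hyw
          have hipos : 0 < (i : ℕ) := by
            rcases Nat.eq_zero_or_pos (i : ℕ) with h0 | h
            · rw [h0] at hemb
              simp at hemb
              have := emb_nil_left hemb
              simp at this
            · exact h
          obtain ⟨j, hj, hjlt, hk, hb⟩ := hcore (i : ℕ) (by omega) hemb hipos
          exact ⟨⟨u, j⟩, hj, rfl, hjlt, Or.inl ⟨by show (i : ℕ) = (j : ℕ) + 1; omega, hb⟩⟩
        · -- w = w ++ [c], the last letter was skipped
          rw [List.concat_eq_append] at hyw hw
          rw [← List.append_assoc] at hyw
          obtain ⟨hx, hbc⟩ := List.append_inj' hyw rfl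
          have hbc' : b = c := by simpa using hbc
          refine ⟨⟨u, i⟩, ?_, rfl, hlt, Or.inr ⟨rfl, ?_⟩⟩
          · exact (ih u i).2
              (Or.inr ⟨hlt, y, w', hx, hemb, fun d hd => hw d (by simp [hd])⟩)
          · rw [hbc']
            exact hw c (by simp)
end PrioAux

namespace PrioAux

variable {α : Type*} (prio : α → ℕ)

lemma autN_accepts {S : Finset (List α)} (hS : ∀ u ∈ S, u ≠ []) (v : List α) :
    v ∈ (autN prio S).accepts ↔ ∃ u ∈ S, PrioEmb prio u v := by
  rw [NFA.mem_accepts]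
  constructor
  · rintro ⟨⟨u, i⟩, hacc, heval⟩
    have hinv := (mem_eval prio hS v u i).1 heval
    have hi : (i : ℕ) = u.1.length := hacc
    refine ⟨u.1, u.2, ?_⟩
    rcases hinv with ⟨_, hemb⟩ | ⟨hlt, _⟩
    · exact hemb
    · omega
  · rintro ⟨u, hu, hemb⟩
    refine ⟨⟨⟨u, hu⟩, ⟨u.length, by show u.length < u.length + 1; omega⟩⟩, ?_, ?_⟩
    · show (u.length : ℕ) = u.length
      rfl
    · exact (mem_eval prio hS v ⟨u, hu⟩ ⟨u.length, by show u.length < u.length + 1; omega⟩).2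
        (Or.inl ⟨rfl, hemb⟩)

end PrioAux


open PrioAux in
/-- Every priority-downward-closed set of words over a finite priority alphabet
is a regular language. -/
theorem prio_downward_closed_regular {α : Type*} [Fintype α] (prio : α → ℕ)
    (L : Language α) (hL : ∀ u v : List α, PrioLE prio u v → v ∈ L → u ∈ L) :
    L.IsRegular := by
  classical
  by_cases h0 : [] ∈ L
  · -- main case: complement has a finite basis of nonempty words
    set M : Set (List α) := {v | v ∉ L} with hM
    have hMup : ∀ u v, PrioLE prio u v → u ∈ M → v ∈ M := by
      intro u v huv hu hv
      exact hu (hL u v huv hv)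
    obtain ⟨B, hBfin, hB⟩ := finite_basis prio M hMup
    have hBM : ∀ u ∈ B, u ∈ M := fun u hu => (hB u).2 ⟨u, hu, prioLE_refl u⟩
    set S : Finset (List α) := hBfin.toFinset with hSdef
    have hSB : ∀ u, u ∈ S ↔ u ∈ B := fun u => Set.Finite.mem_toFinset _
    have hS : ∀ u ∈ S, u ≠ [] := by
      intro u hu hnil
      subst hnil
      exact hBM [] ((hSB []).1 hu) h0
    haveI : Fintype (St S) := by unfold St; infer_instance
    set N := autN prio S with hN
    set D : DFA α (Set (St S)) :=
      { step := N.toDFA.step, start := N.toDFA.start, accept := N.toDFA.acceptᶜ } with hD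
    have hDacc : D.accepts = L := by
      have h1 : ∀ x : List α, x ∈ D.accepts ↔ ¬ x ∈ N.toDFA.accepts := by
        intro x
        constructor
        · intro h h'
          exact h h'
        · intro h
          exact h
      ext x
      rw [h1, N.toDFA_correct, autN_accepts prio hS]
      constructor
      · intro h
        by_contra hxL
        have hxM : x ∈ M := hxL
        obtain ⟨u, huB, huLE⟩ := (hB x).1 hxM
        refine h ⟨u, (hSB u).2 huB, ?_⟩
        rcases huLE with rfl | he
        · exact absurd h0 (hBM [] huB)
        · exact he
      · rintro hxL ⟨u, huS, hemb⟩
        have : x ∈ M := (hB x).2 ⟨u, (hSB u).1 huS, Or.inr hemb⟩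
        exact this hxL
    exact ⟨Fin (Fintype.card (Set (St S))), inferInstance,
      DFA.reindex (Fintype.equivFin _) D, by rw [DFA.accepts_reindex]; exact hDacc⟩
  · -- degenerate case: L = ∅
    have hLe : ∀ v, v ∉ L := fun v hv => h0 (hL [] v (Or.inl rfl) hv)
    set D : DFA α Unit := { step := fun _ _ => (), start := (), accept := ∅ } with hD
    refine ⟨Unit, inferInstance, D, ?_⟩
    have : ∀ x : List α, x ∈ D.accepts ↔ x ∈ L := by
      intro x
      constructor
      · intro h
        exact absurd h (by simp [hD, DFA.mem_accepts])
      · intro h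
        exact absurd h (hLe x)
    ext x
    exact this x
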